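/- arXiv:1409.8022 — 5 statements merged into one kernel-verified Lean document; each statement's English description precedes it below -/
import Mathlib

section
/- If m ∈ ℕ, ϑ ∈ [0,∞), and E is a countably infinite subset of [0,∞), then there exists a finite discrete Borel measure μ on [0,∞) whose set of atoms is a countably infinite subset of [ϑ,∞) disjoint from E, such that ∫ s^m dμ(s) < ∞ and ∫ s^{m+1} dμ(s) = ∞. -/
open MeasureTheory ENNReal

/-- `μ` is a discrete Borel measure on `ℝ` whose set of atoms is exactly `Δ`. -/
def IsDiscreteWithAtoms (μ : Measure ℝ) (Δ : Set ℝ) : Prop :=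
  ∃ α : ℝ → ℝ, (∀ t ∈ Δ, 0 < α t) ∧
    μ = Measure.sum (fun t : Δ => ENNReal.ofReal (α t) • Measure.dirac (t : ℝ))

/-- A tsum dominated by the geometric series is finite. -/
lemma aux_tsum_lt_top {b : ℕ → ℝ≥0∞} (hb : ∀ n, b n ≤ ENNReal.ofReal ((1/2 : ℝ) ^ n)) :
    ∑' n, b n < ⊤ := by
  calc ∑' n, b n ≤ ∑' n, ENNReal.ofReal ((1/2 : ℝ) ^ n) := ENNReal.tsum_le_tsum hb
    _ = ENNReal.ofReal (∑' n, (1/2 : ℝ) ^ n) :=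
        (ENNReal.ofReal_tsum_of_nonneg (fun n => by positivity) summable_geometric_two).symm
    _ < ⊤ := ENNReal.ofReal_lt_top

/-- If `m ∈ ℕ`, `ϑ ≥ 0` and `E ⊆ [0,∞)` is countably infinite, then there exists a finite
discrete Borel measure `μ` whose atom set is a countably infinite subset of `[ϑ,∞)`
disjoint from `E`, with finite `m`-th moment and infinite `(m+1)`-th moment. -/
theorem exists_discrete_measure_avoiding (m : ℕ) (ϑ : ℝ) (hϑ : 0 ≤ ϑ)
    (E : Set ℝ) (hEc : E.Countable) (hEi : E.Infinite) (hE0 : E ⊆ Set.Ici (0 : ℝ)) :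
    ∃ (μ : Measure ℝ) (Δ : Set ℝ), IsFiniteMeasure μ ∧ IsDiscreteWithAtoms μ Δ ∧
      Δ.Countable ∧ Δ.Infinite ∧ Δ ⊆ Set.Ici ϑ ∧ E ∩ Δ = ∅ ∧
      (∫⁻ s, ENNReal.ofReal (s ^ m) ∂μ < ⊤) ∧
      (∫⁻ s, ENNReal.ofReal (s ^ (m + 1)) ∂μ = ⊤) := by
  classical
  set c : ℝ := max ϑ 1 with hc
  have hc1 : (1:ℝ) ≤ c := le_max_right _ _
  have hcϑ : ϑ ≤ c := le_max_left _ _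
  -- pick points avoiding `E`
  have hne : ∀ n : ℕ, (Set.Ioo (c + 2 ^ n) (c + 2 ^ n + 1) \ E).Nonempty := by
    intro n
    rw [Set.nonempty_iff_ne_empty]
    intro h
    have hsub : Set.Ioo (c + 2 ^ n) (c + 2 ^ n + 1) ⊆ E := Set.diff_eq_empty.mp h
    have h1 : volume (Set.Ioo (c + 2 ^ n) (c + 2 ^ n + 1)) ≤ volume E := measure_mono hsub
    rw [hEc.measure_zero, Real.volume_Ioo] at h1
    simp at h1
  set t : ℕ → ℝ := fun n => (hne n).choose with ht
  have htmem : ∀ n, t n ∈ Set.Ioo (c + 2 ^ n) (c + 2 ^ n + 1) := fun n => ((hne n).choose_spec).1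
  have htE : ∀ n, t n ∉ E := fun n => ((hne n).choose_spec).2
  have h2pow : ∀ n : ℕ, (1:ℝ) ≤ 2 ^ n := fun n => one_le_pow₀ one_le_two
  have ht1 : ∀ n, (1:ℝ) ≤ t n := fun n =>
    le_trans (by linarith [h2pow n]) (htmem n).1.le
  have ht0 : ∀ n, (0:ℝ) < t n := fun n => lt_of_lt_of_le one_pos (ht1 n)
  have htϑ : ∀ n, ϑ ≤ t n := fun n => le_trans (by linarith [h2pow n, hcϑ]) (htmem n).1.le
  have hmono : StrictMono t := by
    apply strictMono_nat_of_lt_succ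
    intro n
    have h1 : t n < c + 2 ^ n + 1 := (htmem n).2
    have h2 : c + 2 ^ (n+1) < t (n+1) := (htmem (n+1)).1
    have : (2:ℝ) ^ n + 1 ≤ 2 ^ (n+1) := by
      have := h2pow n; rw [pow_succ]; linarith
    linarith
  have hinj : Function.Injective t := hmono.injective
  set Δ : Set ℝ := Set.range t with hΔ
  set α : ℝ → ℝ := fun s => (s ^ (m+1))⁻¹ with hα
  have hαpos : ∀ s ∈ Δ, 0 < α s := by
    rintro s ⟨n, rfl⟩
    exact inv_pos.mpr (pow_pos (ht0 n) _)
  set μ : Measure ℝ := Measure.sum (fun x : Δ => ENNReal.ofReal (α x) • Measure.dirac (x : ℝ))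
    with hμ
  -- key computation
  have key : ∀ g : ℝ → ℝ≥0∞,
      ∫⁻ s, g s ∂μ = ∑' n, ENNReal.ofReal (α (t n)) * g (t n) := by
    intro g
    rw [hμ, lintegral_sum_measure]
    rw [← (Equiv.ofInjective t hinj).tsum_eq
      (fun x : Δ => ∫⁻ s, g s ∂(ENNReal.ofReal (α x) • Measure.dirac (x : ℝ)))]
    congr 1
    ext n
    simp [lintegral_smul_measure, lintegral_dirac, Equiv.ofInjective_apply]
  have hbound : ∀ n, ENNReal.ofReal ((t n)⁻¹) ≤ ENNReal.ofReal ((1/2 : ℝ) ^ n) := by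
    intro n
    apply ENNReal.ofReal_le_ofReal
    rw [one_div, inv_pow]
    exact inv_anti₀ (pow_pos two_pos n) (le_trans (by linarith [h2pow n, hc1]) (htmem n).1.le)
  refine ⟨μ, Δ, ?_, ⟨α, hαpos, hμ⟩, Set.countable_range t,
    Set.infinite_range_of_injective hinj, ?_, ?_, ?_, ?_⟩
  · -- finite measure
    constructor
    rw [← lintegral_one, key]
    apply aux_tsum_lt_top
    intro n
    rw [mul_one]
    refine le_trans (ENNReal.ofReal_le_ofReal ?_) (hbound n)
    rw [hα]
    exact inv_anti₀ (ht0 n) (le_self_pow₀ (ht1 n) (Nat.succ_ne_zero m))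
  · rintro s ⟨n, rfl⟩
    exact htϑ n
  · ext s
    simp only [Set.mem_inter_iff, Set.mem_empty_iff_false, iff_false]
    rintro ⟨hsE, n, rfl⟩
    exact htE n hsE
  · -- finite m-th moment
    rw [key]
    apply aux_tsum_lt_top
    intro n
    rw [← ENNReal.ofReal_mul (le_of_lt (hαpos _ ⟨n, rfl⟩))]
    refine le_trans (ENNReal.ofReal_le_ofReal ?_) (hbound n)
    have h0 : (0:ℝ) < t n := ht0 n
    have heq : α (t n) * t n ^ m = (t n)⁻¹ := by
      simp only [hα]
      field_simp [pow_succ]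
      ring
    rw [heq]
  · -- infinite (m+1)-th moment
    rw [key]
    have : ∀ n, ENNReal.ofReal (α (t n)) * ENNReal.ofReal (t n ^ (m+1)) = 1 := by
      intro n
      rw [← ENNReal.ofReal_mul (le_of_lt (hαpos _ ⟨n, rfl⟩)), hα]
      rw [inv_mul_cancel₀ (pow_ne_zero _ (ne_of_gt (ht0 n)))]
      exact ENNReal.ofReal_one
    simp only [this]
    exact tsum_const_eq_top_of_ne_zero one_ne_zero
end

section
/- Let X = ⋃_{k≥0} X_k where X_k = ⨆_{j=0}^{k} ℕ^j (with ℕ^0 = {0}), i.e., X is the set of all finite tuples of positive integers including the empty tuple. For every n ∈ ℕ and ϑ ∈ [0,∞), there exists a family {ν_x}_{x ∈ X} of finite discrete Borel measures on [0,∞) such that: (i) the atom sets {at(ν_x)}_{x∈X} are pairwise disjoint countably infinite subsets of [ϑ,∞); (ii) for every k ≥ 0, Σ_{x ∈ ℕ^k} ∫ s^{k+n} dν_x(s) ≤ 2^{-k}; (iii) for every k ≥ 0 and every x ∈ ℕ^k, ∫ s^{k+n+1} dν_x(s) = ∞. -/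
open MeasureTheory ENNReal

noncomputable section AuxFam

namespace AuxFam

variable (n : ℕ) (ϑ : ℝ)

def B : ℝ := max ϑ 1

lemma one_le_B : 1 ≤ B ϑ := le_max_right _ _

lemma theta_le_B : ϑ ≤ B ϑ := le_max_left _ _

def b (x : List ℕ+) : ℝ := B ϑ + ((Encodable.encode x : ℝ) + 2)⁻¹

lemma inv_pos' (x : List ℕ+) : 0 < ((Encodable.encode x : ℝ) + 2)⁻¹ := by positivity

lemma inv_lt_one' (x : List ℕ+) : ((Encodable.encode x : ℝ) + 2)⁻¹ < 1 := by
  rw [inv_lt_one_iff₀]; right; have : (0:ℝ) ≤ (Encodable.encode x : ℝ) := Nat.cast_nonneg _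
  linarith

lemma B_lt_b (x : List ℕ+) : B ϑ < b ϑ x := by
  have := inv_pos' x; unfold b; linarith

lemma b_lt (x : List ℕ+) : b ϑ x < B ϑ + 1 := by
  have := inv_lt_one' x; unfold b; linarith

lemma one_le_b (x : List ℕ+) : 1 ≤ b ϑ x := (one_le_B ϑ).trans (B_lt_b ϑ x).le

lemma b_pos (x : List ℕ+) : 0 < b ϑ x := lt_of_lt_of_le one_pos (one_le_b ϑ x)

lemma b_injective : Function.Injective (b ϑ) := by
  intro x y h
  unfold b at h
  have h2 : ((Encodable.encode x : ℝ) + 2)⁻¹ = ((Encodable.encode y : ℝ) + 2)⁻¹ := by linarith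
  have hx : (0:ℝ) < (Encodable.encode x : ℝ) + 2 := by positivity
  have hy : (0:ℝ) < (Encodable.encode y : ℝ) + 2 := by positivity
  have : ((Encodable.encode x : ℝ) + 2) = ((Encodable.encode y : ℝ) + 2) :=
    inv_injective h2
  have : (Encodable.encode x : ℕ) = Encodable.encode y := by
    exact_mod_cast (by linarith : (Encodable.encode x : ℝ) = Encodable.encode y)
  exact Encodable.encode_injective this

def t (x : List ℕ+) (m : ℕ) : ℝ := b ϑ x * 2 ^ m

lemma one_le_t (x : List ℕ+) (m : ℕ) : 1 ≤ t ϑ x m := by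
  have h1 := one_le_b ϑ x
  have h2 : (1:ℝ) ≤ 2 ^ m := one_le_pow₀ one_le_two
  calc (1:ℝ) = 1 * 1 := (one_mul 1).symm
  _ ≤ b ϑ x * 2 ^ m := by apply mul_le_mul h1 h2 zero_le_one (b_pos ϑ x).le

lemma t_pos (x : List ℕ+) (m : ℕ) : 0 < t ϑ x m := lt_of_lt_of_le one_pos (one_le_t ϑ x m)

lemma t_injective (x : List ℕ+) : Function.Injective (t ϑ x) := by
  intro m l h
  unfold t at h
  have := mul_left_cancel₀ (b_pos ϑ x).ne' h
  exact pow_right_injective₀ (by norm_num) (by norm_num) this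

/-- key injectivity across different `x`. -/
lemma t_eq (x y : List ℕ+) (m l : ℕ) (h : t ϑ x m = t ϑ y l) : x = y ∧ m = l := by
  have key : ∀ x y : List ℕ+, ∀ m l : ℕ, m ≤ l → t ϑ x m = t ϑ y l → b ϑ x = b ϑ y ∧ m = l := by
    intro x y m l hml heq
    unfold t at heq
    obtain ⟨d, rfl⟩ := Nat.exists_eq_add_of_le hml
    rw [pow_add, ← mul_assoc] at heq
    have h2 : b ϑ x = b ϑ y * 2 ^ d :=
      mul_right_cancel₀ (by positivity : ((2:ℝ)^m) ≠ 0)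
        (show b ϑ x * 2 ^ m = (b ϑ y * 2 ^ d) * 2 ^ m by rw [heq]; ring)
    rcases Nat.eq_zero_or_pos d with hd | hd
    · subst hd; rw [pow_zero, mul_one] at h2; exact ⟨h2, (Nat.add_zero m).symm⟩
    · exfalso
      have h3 : (2:ℝ) ≤ 2 ^ d := by
        calc (2:ℝ) = 2^1 := (pow_one 2).symm
        _ ≤ 2^d := pow_le_pow_right₀ one_le_two hd
      have hby := one_le_b ϑ y
      have hB := one_le_B ϑ
      have h4 : b ϑ y * 2 ≤ b ϑ y * 2 ^ d := by nlinarith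
      have h5 : B ϑ + 1 ≤ b ϑ y * 2 := by
        have := B_lt_b ϑ y; nlinarith
      have := b_lt ϑ x
      linarith
  rcases le_total m l with hml | hlm
  · obtain ⟨hb, hm⟩ := key x y m l hml h
    exact ⟨b_injective ϑ hb, hm⟩
  · obtain ⟨hb, hm⟩ := key y x l m hlm h.symm
    exact ⟨(b_injective ϑ hb).symm, hm.symm⟩

def eps (x : List ℕ+) : ℝ := (2:ℝ)⁻¹ ^ (x.length + Encodable.encode x + 1)

lemma eps_pos (x : List ℕ+) : 0 < eps x := by unfold eps; positivity

def w (x : List ℕ+) : ℝ := eps x * b ϑ x / 2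

lemma w_pos (x : List ℕ+) : 0 < w ϑ x := by
  have := eps_pos x; have := b_pos ϑ x; unfold w; positivity

def al (x : List ℕ+) (s : ℝ) : ℝ := w ϑ x / s ^ (x.length + n + 1)

lemma al_pos (x : List ℕ+) (m : ℕ) : 0 < al n ϑ x (t ϑ x m) := by
  have := w_pos ϑ x; have := t_pos ϑ x m; unfold al; positivity

def Δ (x : List ℕ+) : Set ℝ := Set.range (t ϑ x)

def ν (x : List ℕ+) : Measure ℝ :=
  Measure.sum (fun s : Δ ϑ x => ENNReal.ofReal (al n ϑ x s) • Measure.dirac (s : ℝ))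

lemma lintegral_nu (x : List ℕ+) (g : ℝ → ℝ≥0∞) :
    ∫⁻ s, g s ∂(ν n ϑ x) =
      ∑' m : ℕ, ENNReal.ofReal (al n ϑ x (t ϑ x m)) * g (t ϑ x m) := by
  rw [ν, lintegral_sum_measure]
  simp only [Δ]
  simp only [lintegral_smul_measure, lintegral_dirac, smul_eq_mul]
  rw [← (Equiv.ofInjective (t ϑ x) (t_injective ϑ x)).tsum_eq
      (fun s : Δ ϑ x => ENNReal.ofReal (al n ϑ x s) * g s)]
  rfl

/-- geometric sum: `∑' m, ofReal (w x / t x m) = ofReal (eps x)` -/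
lemma sum_geom (x : List ℕ+) :
    ∑' m : ℕ, ENNReal.ofReal (w ϑ x / t ϑ x m) = ENNReal.ofReal (eps x) := by
  have hb := b_pos ϑ x
  have hw := (w_pos ϑ x).le
  have h1 : ∀ m : ℕ, ENNReal.ofReal (w ϑ x / t ϑ x m)
      = ENNReal.ofReal (w ϑ x / b ϑ x) * 2⁻¹ ^ m := by
    intro m
    have : w ϑ x / t ϑ x m = (w ϑ x / b ϑ x) * (2⁻¹:ℝ) ^ m := by
      unfold t; field_simp
      rw [mul_assoc, ← mul_pow]; norm_num
    rw [this, ENNReal.ofReal_mul (by positivity), ENNReal.ofReal_pow (by norm_num)]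
    congr 2
    rw [ENNReal.ofReal_inv_of_pos (by norm_num)]
    norm_num
  simp_rw [h1]
  rw [ENNReal.tsum_mul_left, ENNReal.tsum_geometric, ENNReal.one_sub_inv_two, inv_inv]
  have h2 : (2:ℝ≥0∞) = ENNReal.ofReal 2 := by norm_num
  rw [h2, ← ENNReal.ofReal_mul (by positivity)]
  congr 1
  unfold w
  field_simp

lemma term_eq (x : List ℕ+) (m : ℕ) :
    ENNReal.ofReal (al n ϑ x (t ϑ x m)) * ENNReal.ofReal ((t ϑ x m) ^ (x.length + n)) =
      ENNReal.ofReal (w ϑ x / t ϑ x m) := by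
  have ht := t_pos ϑ x m
  have hw := (w_pos ϑ x).le
  rw [← ENNReal.ofReal_mul (by unfold al; exact div_nonneg (w_pos ϑ x).le (by positivity))]
  congr 1
  unfold al
  rw [pow_succ]
  field_simp

lemma moment_low (x : List ℕ+) :
    ∫⁻ s, ENNReal.ofReal (s ^ (x.length + n)) ∂(ν n ϑ x) = ENNReal.ofReal (eps x) := by
  rw [lintegral_nu]
  simp_rw [term_eq]
  exact sum_geom ϑ x

lemma moment_high (x : List ℕ+) :
    ∫⁻ s, ENNReal.ofReal (s ^ (x.length + n + 1)) ∂(ν n ϑ x) = ⊤ := by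
  rw [lintegral_nu]
  have h1 : ∀ m : ℕ, ENNReal.ofReal (al n ϑ x (t ϑ x m)) *
      ENNReal.ofReal ((t ϑ x m) ^ (x.length + n + 1)) = ENNReal.ofReal (w ϑ x) := by
    intro m
    have ht := t_pos ϑ x m
    rw [← ENNReal.ofReal_mul (by unfold al; exact div_nonneg (w_pos ϑ x).le (by positivity))]
    congr 1
    unfold al
    field_simp
  simp_rw [h1]
  exact ENNReal.tsum_const_eq_top_of_ne_zero (ENNReal.ofReal_pos.mpr (w_pos ϑ x)).ne'

lemma nu_finite (x : List ℕ+) : IsFiniteMeasure (ν n ϑ x) := by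
  constructor
  rw [← MeasureTheory.lintegral_one, lintegral_nu]
  have h1 : ∀ m : ℕ, ENNReal.ofReal (al n ϑ x (t ϑ x m)) * 1
      ≤ ENNReal.ofReal (w ϑ x / t ϑ x m) := by
    intro m
    rw [mul_one]
    apply ENNReal.ofReal_le_ofReal
    unfold al
    have ht := one_le_t ϑ x m
    have hw := (w_pos ϑ x).le
    have hle : t ϑ x m ≤ (t ϑ x m) ^ (x.length + n + 1) := by
      calc t ϑ x m = (t ϑ x m) ^ 1 := (pow_one _).symm
      _ ≤ (t ϑ x m) ^ (x.length + n + 1) := pow_le_pow_right₀ ht (by omega)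
    exact div_le_div_of_nonneg_left hw (by linarith) hle
  calc ∑' m : ℕ, ENNReal.ofReal (al n ϑ x (t ϑ x m)) * 1
      ≤ ∑' m : ℕ, ENNReal.ofReal (w ϑ x / t ϑ x m) := ENNReal.tsum_le_tsum h1
  _ = ENNReal.ofReal (eps x) := sum_geom ϑ x
  _ < ⊤ := ENNReal.ofReal_lt_top

end AuxFam

end AuxFam

/-- Indexing the family by the set `X` of all finite tuples of positive integers
(modelled as `List ℕ+`, `ℕ^k` corresponding to lists of length `k`): for every `n ∈ ℕ` and
`ϑ ≥ 0`, there is a family `{ν_x}` of finite discrete Borel measures on `[0,∞)` with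
pairwise disjoint countably infinite atom sets contained in `[ϑ,∞)`, such that
`Σ_{x ∈ ℕ^k} ∫ s^{k+n} dν_x ≤ 2^{-k}` and `∫ s^{k+n+1} dν_x = ∞` for every `x ∈ ℕ^k`. -/
theorem exists_family_discrete_measures (n : ℕ) (ϑ : ℝ) (hϑ : 0 ≤ ϑ) :
    ∃ (ν : List ℕ+ → Measure ℝ) (Δ : List ℕ+ → Set ℝ),
      (∀ x, IsFiniteMeasure (ν x)) ∧
      (∀ x, IsDiscreteWithAtoms (ν x) (Δ x)) ∧
      (∀ x, (Δ x).Countable ∧ (Δ x).Infinite ∧ Δ x ⊆ Set.Ici ϑ) ∧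
      Pairwise (Function.onFun Disjoint Δ) ∧
      (∀ k : ℕ, (∑' x : {x : List ℕ+ // x.length = k},
          ∫⁻ s, ENNReal.ofReal (s ^ (k + n)) ∂(ν x)) ≤ 2⁻¹ ^ k) ∧
      (∀ k : ℕ, ∀ x : List ℕ+, x.length = k →
          ∫⁻ s, ENNReal.ofReal (s ^ (k + n + 1)) ∂(ν x) = ⊤) := by
  refine ⟨AuxFam.ν n ϑ, AuxFam.Δ ϑ, AuxFam.nu_finite n ϑ, ?_, ?_, ?_, ?_, ?_⟩
  · intro x
    exact ⟨AuxFam.al n ϑ x, fun s hs => by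
      obtain ⟨m, rfl⟩ := hs
      exact AuxFam.al_pos n ϑ x m, rfl⟩
  · intro x
    refine ⟨Set.countable_range _, Set.infinite_range_of_injective (AuxFam.t_injective ϑ x), ?_⟩
    rintro s ⟨m, rfl⟩
    exact le_trans ((AuxFam.theta_le_B ϑ).trans (AuxFam.B_lt_b ϑ x).le)
      (le_trans (le_mul_of_one_le_right (AuxFam.b_pos ϑ x).le (one_le_pow₀ one_le_two)) le_rfl)
  · intro x y hxy
    rw [Function.onFun, Set.disjoint_left]
    rintro s ⟨m, rfl⟩ ⟨l, hl⟩
    exact hxy ((AuxFam.t_eq ϑ y x l m hl).1).symm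
  · intro k
    have heq : ∀ x : {x : List ℕ+ // x.length = k},
        ∫⁻ s, ENNReal.ofReal (s ^ (k + n)) ∂(AuxFam.ν n ϑ x)
          = 2⁻¹ ^ (k + 1) * 2⁻¹ ^ (Encodable.encode (x : List ℕ+)) := by
      rintro ⟨x, hx⟩
      rw [show k + n = x.length + n by rw [hx], AuxFam.moment_low]
      unfold AuxFam.eps
      rw [ENNReal.ofReal_pow (by norm_num), hx]
      rw [ENNReal.ofReal_inv_of_pos (by norm_num)]
      norm_num
      rw [← pow_add]
      congr 1
      ring
    rw [tsum_congr heq, ENNReal.tsum_mul_left]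
    have hinj : Function.Injective
        (fun x : {x : List ℕ+ // x.length = k} => Encodable.encode (x : List ℕ+)) := by
      intro a b h
      exact Subtype.ext (Encodable.encode_injective h)
    calc 2⁻¹ ^ (k + 1) * ∑' x : {x : List ℕ+ // x.length = k},
          (2⁻¹:ℝ≥0∞) ^ (Encodable.encode (x : List ℕ+))
        ≤ 2⁻¹ ^ (k + 1) * ∑' j : ℕ, (2⁻¹:ℝ≥0∞) ^ j := by
          gcongr
          exact ENNReal.tsum_comp_le_tsum_of_injective hinj (fun j => (2⁻¹:ℝ≥0∞) ^ j)
    _ = 2⁻¹ ^ (k + 1) * 2 := by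
        rw [ENNReal.tsum_geometric, ENNReal.one_sub_inv_two, inv_inv]
    _ = 2⁻¹ ^ k := by
        rw [pow_succ, mul_assoc, ENNReal.inv_mul_cancel (by norm_num) (by norm_num), mul_one]
  · intro k x hx
    rw [show k + n + 1 = x.length + n + 1 by rw [hx]]
    exact AuxFam.moment_high n ϑ x
end

section
/- Let n ∈ ℕ and ϑ ∈ [1,∞). Then there exist a family {Ω_x}_{x ∈ X} of countably infinite subsets of [ϑ,∞), indexed by the set X of finite tuples of positive integers (including the empty tuple 0), and a discrete Borel probability measure ν on [0,∞) with closed support contained in [ϑ,∞), such that: (i) the atom set of ν equals Ω_0; (ii) Ω_0 = ⨆_{j₁≥1} Ω_{(j₁)} and, for every tuple (j₁,...,j_k), Ω_{(j₁,...,j_k)} = ⨆_{j_{k+1}≥1} Ω_{(j₁,...,j_k,j_{k+1})} (disjoint unions); (iii) for every k ≥ 0 and every x ∈ ℕ^k, ∫_{Ω_x} s^{k+n} dν(s) < ∞ and ∫_{Ω_x} s^{k+n+1} dν(s) = ∞. -/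
open MeasureTheory ENNReal

namespace PDMAux

noncomputable def enc (x : List ℕ+) : ℕ := Encodable.encode x

lemma enc_inj : Function.Injective enc := Encodable.encode_injective

/-- The atom values. -/
noncomputable def v (ϑ : ℝ) (x : List ℕ+) : ℝ := ϑ * 2 ^ enc x

variable {ϑ : ℝ} {n : ℕ}

lemma ϑ_le_v (hϑ : 1 ≤ ϑ) (x : List ℕ+) : ϑ ≤ v ϑ x := by
  have h1 : (1:ℝ) ≤ 2 ^ enc x := one_le_pow₀ one_le_two
  have := le_mul_of_one_le_right (le_trans zero_le_one hϑ) h1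
  simpa [v] using this

lemma one_le_v (hϑ : 1 ≤ ϑ) (x : List ℕ+) : 1 ≤ v ϑ x := le_trans hϑ (ϑ_le_v hϑ x)

lemma v_pos (hϑ : 1 ≤ ϑ) (x : List ℕ+) : 0 < v ϑ x := lt_of_lt_of_le one_pos (one_le_v hϑ x)

lemma two_pow_le_v (hϑ : 1 ≤ ϑ) (x : List ℕ+) : (2:ℝ) ^ enc x ≤ v ϑ x := by
  have h2 : (0:ℝ) < 2 ^ enc x := by positivity
  have := mul_le_mul_of_nonneg_right hϑ h2.le
  simpa [v] using this

lemma v_inj (hϑ : 1 ≤ ϑ) : Function.Injective (v ϑ) := by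
  intro a b h
  have hϑ0 : ϑ ≠ 0 := by linarith
  have h2 : (2:ℝ) ^ enc a = 2 ^ enc b := by
    have := h; unfold v at this
    exact mul_left_cancel₀ hϑ0 this
  exact enc_inj (pow_right_injective₀ two_pos (by norm_num) h2)

/-- The index sets: lists `x` such that the padded sequence `x,1,1,…` begins with `y`. -/
def E (y : List ℕ+) : Set (List ℕ+) := {x | ∀ i, (h : i < y.length) → x.getD i 1 = y[i]}

lemma E_nil : E ([] : List ℕ+) = Set.univ := by
  ext x; simp [E]

lemma append_mem_E (y z : List ℕ+) : y ++ z ∈ E y := by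
  intro i h
  rw [List.getD_append _ _ _ _ h, List.getD_eq_getElem _ _ h]

lemma mem_E_append {y : List ℕ+} {j : ℕ+} {x : List ℕ+} :
    x ∈ E (y ++ [j]) ↔ x ∈ E y ∧ x.getD y.length 1 = j := by
  constructor
  · intro hx
    refine ⟨fun i h => ?_, ?_⟩
    · have h' : i < (y ++ [j]).length := by simp; omega
      have := hx i h'
      rwa [List.getElem_append_left h] at this
    · have h' : y.length < (y ++ [j]).length := by simp
      have := hx y.length h'
      rwa [List.getElem_concat_length rfl] at this
  · rintro ⟨hx, hj⟩ i h
    have hlen : i < y.length + 1 := by simpa using h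
    rcases Nat.lt_or_ge i y.length with h1 | h1
    · rw [List.getElem_append_left h1]
      exact hx i h1
    · have : i = y.length := by omega
      subst this
      rw [List.getElem_concat_length rfl]
      exact hj

lemma E_eq_iUnion (y : List ℕ+) : E y = ⋃ j : ℕ+, E (y ++ [j]) := by
  ext x
  simp only [Set.mem_iUnion, mem_E_append]
  exact ⟨fun hx => ⟨x.getD y.length 1, hx, rfl⟩, fun ⟨j, hx, _⟩ => hx⟩

lemma E_pairwise_disjoint (y : List ℕ+) :
    Pairwise (Function.onFun Disjoint fun j : ℕ+ => E (y ++ [j])) := by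
  intro j j' hjj'
  rw [Function.onFun, Set.disjoint_left]
  rintro x hx hx'
  rw [mem_E_append] at hx hx'
  exact hjj' (hx.2.symm.trans hx'.2)

lemma eq_take_of_mem_E {y x : List ℕ+} (hx : x ∈ E y) (hlen : x.length ≤ y.length) :
    x = y.take x.length := by
  apply List.ext_getElem
  · simp [hlen]
  · intro i h1 h2
    have hi : i < y.length := lt_of_lt_of_le h1 hlen
    have := hx i hi
    rw [List.getD_eq_getElem _ _ h1] at this
    rw [this, List.getElem_take]

lemma E_infinite (y : List ℕ+) : (E y).Infinite := by
  have hinj : Function.Injective (fun r : ℕ => y ++ List.replicate r 1) := by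
    intro a b hab
    have h := congrArg List.length hab
    simpa using h
  exact Set.infinite_of_injective_forall_mem hinj (fun r => append_mem_E y _)

/-- Unnormalized weights. -/
noncomputable def w (ϑ : ℝ) (n : ℕ) (x : List ℕ+) : ℝ := (v ϑ x ^ (x.length + n))⁻¹

lemma w_pos (hϑ : 1 ≤ ϑ) (x : List ℕ+) : 0 < w ϑ n x := by
  have := v_pos hϑ x
  unfold w; positivity

open scoped Classical in
noncomputable def G (ϑ : ℝ) (n : ℕ) (y : List ℕ+) (e : ℕ) : ℝ≥0∞ :=
  ∑' x : List ℕ+, if x ∈ E y then ENNReal.ofReal (w ϑ n x) * ENNReal.ofReal (v ϑ x ^ e) else 0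

lemma G_lt_top (hϑ : 1 ≤ ϑ) (y : List ℕ+) : G ϑ n y (y.length + n) < ⊤ := by
  classical
  unfold G
  set k := y.length with hk
  have hbound : ∀ x : List ℕ+,
      (if x ∈ E y then ENNReal.ofReal (w ϑ n x) * ENNReal.ofReal (v ϑ x ^ (k + n)) else 0) ≤
      (if x ∈ E y ∧ x.length ≤ k then
          ENNReal.ofReal (w ϑ n x) * ENNReal.ofReal (v ϑ x ^ (k + n)) else 0)
        + (2⁻¹ : ℝ≥0∞) ^ enc x := by
    intro x
    by_cases hx : x ∈ E y
    · rcases le_or_gt x.length k with hlen | hlen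
      · simp only [hx, hlen, if_pos, and_self, if_true]
        exact le_add_of_nonneg_right (zero_le)
      · have hterm : ENNReal.ofReal (w ϑ n x) * ENNReal.ofReal (v ϑ x ^ (k + n)) ≤
            (2⁻¹ : ℝ≥0∞) ^ enc x := by
          rw [← ENNReal.ofReal_mul (le_of_lt (w_pos hϑ x))]
          have hv1 : 1 ≤ v ϑ x := one_le_v hϑ x
          have hv0 : 0 < v ϑ x := v_pos hϑ x
          have hle : w ϑ n x * v ϑ x ^ (k + n) ≤ (v ϑ x)⁻¹ := by
            unfold w
            rw [inv_mul_le_iff₀ (by positivity), ← div_eq_mul_inv, le_div_iff₀ hv0, ← pow_succ]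
            exact pow_le_pow_right₀ hv1 (by omega)
          have hle2 : (v ϑ x)⁻¹ ≤ ((2:ℝ) ^ enc x)⁻¹ := by
            exact inv_anti₀ (by positivity) (two_pow_le_v hϑ x)
          calc ENNReal.ofReal (w ϑ n x * v ϑ x ^ (k + n))
              ≤ ENNReal.ofReal (((2:ℝ) ^ enc x)⁻¹) :=
                ENNReal.ofReal_le_ofReal (le_trans hle hle2)
            _ = (2⁻¹ : ℝ≥0∞) ^ enc x := by
                rw [← inv_pow, ENNReal.ofReal_pow (by norm_num),
                  ENNReal.ofReal_inv_of_pos two_pos, ENNReal.ofReal_ofNat]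
        rw [if_pos hx, if_neg (fun hc => (not_le.2 hlen) hc.2), zero_add]
        exact hterm
    · simp [hx]
  have hsum := ENNReal.tsum_le_tsum hbound
  rw [ENNReal.tsum_add] at hsum
  apply lt_of_le_of_lt hsum
  apply ENNReal.add_lt_top.2
  constructor
  · -- finite-support part
    have hfin : ∑' x : List ℕ+, (if x ∈ E y ∧ x.length ≤ k then
        ENNReal.ofReal (w ϑ n x) * ENNReal.ofReal (v ϑ x ^ (k + n)) else 0)
        = ∑ x ∈ (Finset.range (k+1)).image (fun m => y.take m),
            (if x ∈ E y ∧ x.length ≤ k then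
              ENNReal.ofReal (w ϑ n x) * ENNReal.ofReal (v ϑ x ^ (k + n)) else 0) := by
      apply tsum_eq_sum
      intro b hb
      rw [if_neg]
      rintro ⟨hbE, hble⟩
      apply hb
      rw [Finset.mem_image]
      exact ⟨b.length, Finset.mem_range.2 (by omega), (eq_take_of_mem_E hbE hble).symm⟩
    rw [hfin]
    apply ENNReal.sum_lt_top.2
    intro a _
    split
    · exact ENNReal.mul_lt_top ENNReal.ofReal_lt_top ENNReal.ofReal_lt_top
    · exact ENNReal.zero_lt_top
  · -- geometric part
    have h1 : ∑' x : List ℕ+, (2⁻¹ : ℝ≥0∞) ^ enc x ≤ ∑' m : ℕ, (2⁻¹ : ℝ≥0∞) ^ m :=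
      ENNReal.tsum_comp_le_tsum_of_injective enc_inj _
    apply lt_of_le_of_lt h1
    rw [ENNReal.tsum_geometric]
    simp [ENNReal.inv_lt_top]

lemma G_eq_top (hϑ : 1 ≤ ϑ) (y : List ℕ+) : G ϑ n y (y.length + n + 1) = ⊤ := by
  classical
  unfold G
  apply eq_top_iff.2
  have hinj : Function.Injective (fun j : ℕ+ => y ++ [j]) := by
    intro a b hab
    simpa using List.append_cancel_left hab
  have hle := ENNReal.tsum_comp_le_tsum_of_injective hinj
    (fun x => if x ∈ E y then ENNReal.ofReal (w ϑ n x) * ENNReal.ofReal (v ϑ x ^ (y.length + n + 1)) else 0)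
  refine le_trans ?_ hle
  have hterm : ∀ j : ℕ+,
      (if y ++ [j] ∈ E y then ENNReal.ofReal (w ϑ n (y ++ [j])) *
        ENNReal.ofReal (v ϑ (y ++ [j]) ^ (y.length + n + 1)) else 0) = 1 := by
    intro j
    rw [if_pos (append_mem_E y [j])]
    rw [← ENNReal.ofReal_mul (le_of_lt (w_pos hϑ _))]
    unfold w
    have hv0 : v ϑ (y ++ [j]) ≠ 0 := ne_of_gt (v_pos hϑ _)
    have hlen : (y ++ [j]).length = y.length + 1 := by simp
    rw [hlen]
    rw [show y.length + 1 + n = y.length + n + 1 by omega]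
    rw [inv_mul_cancel₀ (by positivity)]
    simp
  calc (⊤ : ℝ≥0∞) = ∑' _ : ℕ+, (1 : ℝ≥0∞) :=
        (ENNReal.tsum_const_eq_top_of_ne_zero one_ne_zero).symm
    _ ≤ _ := by
        apply le_of_eq
        exact tsum_congr fun j => (hterm j).symm


lemma mem_E_nil (x : List ℕ+) : x ∈ E ([] : List ℕ+) := by
  intro i h
  simp at h

/-- Total unnormalized mass. -/
noncomputable def T (ϑ : ℝ) (n : ℕ) : ℝ≥0∞ := ∑' x : List ℕ+, ENNReal.ofReal (w ϑ n x)

lemma T_ne_zero (hϑ : 1 ≤ ϑ) : T ϑ n ≠ 0 := by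
  have h1 : ENNReal.ofReal (w ϑ n []) ≤ T ϑ n :=
    ENNReal.le_tsum (f := fun x => ENNReal.ofReal (w ϑ n x)) []
  have h2 : (0:ℝ≥0∞) < ENNReal.ofReal (w ϑ n []) := ENNReal.ofReal_pos.2 (w_pos hϑ _)
  exact (lt_of_lt_of_le h2 h1).ne'

lemma T_lt_top (hϑ : 1 ≤ ϑ) : T ϑ n < ⊤ := by
  classical
  have hle : T ϑ n ≤ G ϑ n [] n := by
    apply ENNReal.tsum_le_tsum
    intro x
    rw [if_pos (mem_E_nil x)]
    calc ENNReal.ofReal (w ϑ n x) = ENNReal.ofReal (w ϑ n x) * 1 := (mul_one _).symm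
      _ ≤ ENNReal.ofReal (w ϑ n x) * ENNReal.ofReal (v ϑ x ^ n) := by
          apply mul_le_mul_right
          exact ENNReal.one_le_ofReal.2 (one_le_pow₀ (one_le_v hϑ x))
  refine lt_of_le_of_lt hle ?_
  simpa using G_lt_top (n := n) hϑ []

lemma T_ne_top (hϑ : 1 ≤ ϑ) : T ϑ n ≠ ⊤ := (T_lt_top hϑ).ne

lemma c_pos (hϑ : 1 ≤ ϑ) : 0 < (T ϑ n).toReal :=
  ENNReal.toReal_pos (T_ne_zero hϑ) (T_ne_top hϑ)

/-- Normalized weight function on the reals. -/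
noncomputable def alpha (ϑ : ℝ) (n : ℕ) : ℝ → ℝ :=
  Function.extend (v ϑ) (fun x => w ϑ n x / (T ϑ n).toReal) (fun _ => 1)

lemma alpha_apply (hϑ : 1 ≤ ϑ) (x : List ℕ+) :
    alpha ϑ n (v ϑ x) = w ϑ n x / (T ϑ n).toReal :=
  (v_inj hϑ).extend_apply _ _ x

/-- The sets `Ω_y`. -/
def Om (ϑ : ℝ) (y : List ℕ+) : Set ℝ := v ϑ '' E y

lemma Om_nil_eq_range : Om ϑ [] = Set.range (v ϑ) := by
  rw [Om, E_nil, Set.image_univ]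

lemma mem_Om_iff (hϑ : 1 ≤ ϑ) {y x : List ℕ+} : v ϑ x ∈ Om ϑ y ↔ x ∈ E y :=
  (v_inj hϑ).mem_set_image

lemma Om_countable (y : List ℕ+) : (Om ϑ y).Countable :=
  (Set.to_countable (E y)).image _

lemma Om_measurableSet (y : List ℕ+) : MeasurableSet (Om ϑ y) :=
  (Om_countable y).measurableSet

/-- The measure. -/
noncomputable def nu (ϑ : ℝ) (n : ℕ) : Measure ℝ :=
  Measure.sum (fun t : ↥(Om ϑ []) => ENNReal.ofReal (alpha ϑ n t) • Measure.dirac (t : ℝ))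

/-- Reindexing sums over the atom set by lists. -/
lemma tsum_atoms (hϑ : 1 ≤ ϑ) (g : ℝ → ℝ≥0∞) :
    ∑' t : ↥(Om ϑ []), g ↑t = ∑' x : List ℕ+, g (v ϑ x) := by
  have hbij : Function.Bijective
      (fun x : List ℕ+ => (⟨v ϑ x, ⟨x, mem_E_nil x, rfl⟩⟩ : ↥(Om ϑ []))) := by
    constructor
    · intro a b hab
      exact v_inj hϑ (congrArg Subtype.val hab)
    · rintro ⟨t, x, -, rfl⟩
      exact ⟨x, rfl⟩
  rw [← Equiv.tsum_eq (Equiv.ofBijective _ hbij) (fun t => g ↑t)]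
  exact tsum_congr fun x => rfl

lemma nu_apply (hϑ : 1 ≤ ϑ) {S : Set ℝ} (hS : MeasurableSet S) :
    nu ϑ n S = ∑' x : List ℕ+,
      ENNReal.ofReal (w ϑ n x / (T ϑ n).toReal) * Measure.dirac (v ϑ x) S := by
  rw [nu, Measure.sum_apply _ hS]
  have h0 : ∀ t : ↥(Om ϑ []),
      (ENNReal.ofReal (alpha ϑ n ↑t) • Measure.dirac (t : ℝ)) S
        = ENNReal.ofReal (alpha ϑ n ↑t) * Measure.dirac (t : ℝ) S := fun t => by
    rw [Measure.smul_apply, smul_eq_mul]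
  rw [tsum_congr h0, tsum_atoms hϑ (fun t => ENNReal.ofReal (alpha ϑ n t) * Measure.dirac t S)]
  exact tsum_congr fun x => by rw [alpha_apply hϑ]

lemma nu_univ (hϑ : 1 ≤ ϑ) : nu ϑ n Set.univ = 1 := by
  rw [nu_apply hϑ MeasurableSet.univ]
  have h1 : ∀ x : List ℕ+,
      ENNReal.ofReal (w ϑ n x / (T ϑ n).toReal) * Measure.dirac (v ϑ x) Set.univ
        = ENNReal.ofReal (w ϑ n x) * ENNReal.ofReal ((T ϑ n).toReal)⁻¹ := by
    intro x
    rw [Measure.dirac_apply_of_mem (Set.mem_univ _), mul_one, div_eq_mul_inv,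
      ENNReal.ofReal_mul (le_of_lt (w_pos hϑ x))]
  rw [tsum_congr h1, ENNReal.tsum_mul_right]
  rw [ENNReal.ofReal_inv_of_pos (c_pos hϑ), ENNReal.ofReal_toReal (T_ne_top hϑ)]
  exact ENNReal.mul_inv_cancel (T_ne_zero hϑ) (T_ne_top hϑ)

lemma nu_Iio (hϑ : 1 ≤ ϑ) : nu ϑ n (Set.Iio ϑ) = 0 := by
  rw [nu_apply hϑ measurableSet_Iio]
  have h1 : ∀ x : List ℕ+,
      ENNReal.ofReal (w ϑ n x / (T ϑ n).toReal) * Measure.dirac (v ϑ x) (Set.Iio ϑ) = 0 := by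
    intro x
    rw [Measure.dirac_apply' _ measurableSet_Iio,
      Set.indicator_of_notMem (by simpa using (ϑ_le_v hϑ x).not_gt), mul_zero]
  rw [tsum_congr h1]
  simp

lemma setLintegral_nu (hϑ : 1 ≤ ϑ) (y : List ℕ+) (e : ℕ) :
    ∫⁻ s in Om ϑ y, ENNReal.ofReal (s ^ e) ∂(nu ϑ n)
      = G ϑ n y e * ENNReal.ofReal ((T ϑ n).toReal)⁻¹ := by
  classical
  have hf : Measurable fun s : ℝ => ENNReal.ofReal (s ^ e) :=
    (measurable_id.pow_const e).ennreal_ofReal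
  rw [nu, Measure.restrict_sum _ (Om_measurableSet y), lintegral_sum_measure]
  have h1 : ∀ t : ↥(Om ϑ []),
      ∫⁻ s in Om ϑ y, ENNReal.ofReal (s ^ e)
          ∂(ENNReal.ofReal (alpha ϑ n t) • Measure.dirac (t : ℝ))
        = ENNReal.ofReal (alpha ϑ n t) *
            (if (t : ℝ) ∈ Om ϑ y then ENNReal.ofReal ((t : ℝ) ^ e) else 0) := by
    intro t
    rw [Measure.restrict_smul, lintegral_smul_measure,
      setLIntegral_dirac' hf (Om_measurableSet y), smul_eq_mul]
  rw [tsum_congr h1]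
  rw [tsum_atoms hϑ (fun t => ENNReal.ofReal (alpha ϑ n t) *
    (if t ∈ Om ϑ y then ENNReal.ofReal (t ^ e) else 0))]
  have h2 : ∀ x : List ℕ+,
      ENNReal.ofReal (alpha ϑ n (v ϑ x)) *
        (if v ϑ x ∈ Om ϑ y then ENNReal.ofReal (v ϑ x ^ e) else 0)
      = (if x ∈ E y then ENNReal.ofReal (w ϑ n x) * ENNReal.ofReal (v ϑ x ^ e) else 0)
          * ENNReal.ofReal ((T ϑ n).toReal)⁻¹ := by
    intro x
    rw [alpha_apply hϑ]
    by_cases hx : x ∈ E y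
    · rw [if_pos ((mem_Om_iff hϑ).2 hx), if_pos hx, div_eq_mul_inv,
        ENNReal.ofReal_mul (le_of_lt (w_pos hϑ x))]
      ring
    · rw [if_neg (fun h => hx ((mem_Om_iff hϑ).1 h)), if_neg hx, mul_zero, zero_mul]
  rw [tsum_congr h2, ENNReal.tsum_mul_right, G]

lemma ofReal_toReal_inv_pos (hϑ : 1 ≤ ϑ) (n : ℕ) :
    0 < ENNReal.ofReal ((T ϑ n).toReal)⁻¹ :=
  ENNReal.ofReal_pos.2 (inv_pos.2 (c_pos hϑ))

end PDMAux

/-- For `n ∈ ℕ` and `ϑ ∈ [1,∞)` there exist a family `{Ω_x}` of countably infinite subsets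
of `[ϑ,∞)`, indexed by finite tuples of positive integers (modelled as `List ℕ+`, the
empty tuple being `[]`), and a discrete Borel probability measure `ν` supported in `[ϑ,∞)`
such that: (i) the atom set of `ν` is `Ω_[]`; (ii) each `Ω_x` is the pairwise disjoint
union of the sets `Ω_{x⌢j}`, `j ∈ ℕ`; (iii) for every tuple `x` of length `k`,
`∫_{Ω_x} s^{k+n} dν < ∞` and `∫_{Ω_x} s^{k+n+1} dν = ∞`. -/
theorem exists_partitioned_discrete_measure (n : ℕ) (ϑ : ℝ) (hϑ : 1 ≤ ϑ) :
    ∃ (Ω : List ℕ+ → Set ℝ) (ν : Measure ℝ),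
      (∀ x, (Ω x).Countable ∧ (Ω x).Infinite ∧ Ω x ⊆ Set.Ici ϑ) ∧
      IsProbabilityMeasure ν ∧ IsDiscreteWithAtoms ν (Ω []) ∧ ν (Set.Iio ϑ) = 0 ∧
      (∀ x : List ℕ+, Ω x = ⋃ j : ℕ+, Ω (x ++ [j])) ∧
      (∀ x : List ℕ+, Pairwise (Function.onFun Disjoint fun j : ℕ+ => Ω (x ++ [j]))) ∧
      (∀ x : List ℕ+,
        (∫⁻ s in Ω x, ENNReal.ofReal (s ^ (x.length + n)) ∂ν < ⊤) ∧
        (∫⁻ s in Ω x, ENNReal.ofReal (s ^ (x.length + n + 1)) ∂ν = ⊤)) := by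
  refine ⟨PDMAux.Om ϑ, PDMAux.nu ϑ n, ?_, ?_, ?_, ?_, ?_, ?_, ?_⟩
  · intro y
    refine ⟨PDMAux.Om_countable y, ?_, ?_⟩
    · exact (PDMAux.E_infinite y).image ((PDMAux.v_inj hϑ).injOn)
    · rintro - ⟨x, -, rfl⟩
      exact PDMAux.ϑ_le_v hϑ x
  · exact ⟨PDMAux.nu_univ hϑ⟩
  · refine ⟨PDMAux.alpha ϑ n, ?_, rfl⟩
    rintro - ⟨x, -, rfl⟩
    rw [PDMAux.alpha_apply hϑ]
    exact div_pos (PDMAux.w_pos hϑ x) (PDMAux.c_pos hϑ)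
  · exact PDMAux.nu_Iio hϑ
  · intro y
    rw [PDMAux.Om, PDMAux.E_eq_iUnion, Set.image_iUnion]
    rfl
  · intro y j j' hjj'
    exact Set.disjoint_image_of_injective (PDMAux.v_inj hϑ)
      (PDMAux.E_pairwise_disjoint y hjj')
  · intro y
    constructor
    · rw [PDMAux.setLintegral_nu hϑ]
      exact ENNReal.mul_lt_top (PDMAux.G_lt_top hϑ y) ENNReal.ofReal_lt_top
    · rw [PDMAux.setLintegral_nu hϑ, PDMAux.G_eq_top hϑ y]
      exact ENNReal.top_mul (PDMAux.ofReal_toReal_inv_pos hϑ n).ne'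
end

section
/- Let ν be a Borel measure on [1,∞), k ∈ ℕ, and let Ω = ⨆_{j≥1} Ω_j be a Borel set partitioned into countably many Borel sets, with 0 < ∫_{Ω_j} s^{k+1} dν(s) < ∞ for each j and 0 < ∫_Ω s^k dν(s) < ∞. Define probability measures μ_j(Δ) = (∫_{Δ∩Ω_j} s^{k+1} dν)/(∫_{Ω_j} s^{k+1} dν) and μ(Δ) = (∫_{Δ∩Ω} s^k dν)/(∫_Ω s^k dν), and weights λ_j² = (∫_{Ω_j} s^{k+1} dν)/(∫_Ω s^k dν). Then μ(Δ) = Σ_{j≥1} λ_j² ∫_Δ (1/s) dμ_j(s) for every Borel set Δ. -/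
open MeasureTheory ENNReal

/-- Consistency condition: with `Ω = ⨆_j Ω_j` partitioned, weights
`λ_j² = (∫_{Ω_j} s^{k+1} dν)/(∫_Ω s^k dν)` and the normalized measures `μ_j`, `μ` as in
the statement, one has `μ(Δ) = Σ_j λ_j² ∫_Δ (1/s) dμ_j(s)` for every Borel set `Δ`. -/
theorem consistency_condition (ν : Measure ℝ) (hν : ν (Set.Iio 1) = 0) (k : ℕ)
    (Ω : Set ℝ) (Ωj : ℕ → Set ℝ) (hΩm : ∀ j, MeasurableSet (Ωj j))
    (hdisj : Pairwise (Function.onFun Disjoint Ωj)) (hunion : Ω = ⋃ j, Ωj j)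
    (hΩ1 : Ω ⊆ Set.Ici (1 : ℝ))
    (hjpos : ∀ j, 0 < ∫⁻ s in Ωj j, ENNReal.ofReal (s ^ (k + 1)) ∂ν)
    (hjfin : ∀ j, ∫⁻ s in Ωj j, ENNReal.ofReal (s ^ (k + 1)) ∂ν < ⊤)
    (hpos : 0 < ∫⁻ s in Ω, ENNReal.ofReal (s ^ k) ∂ν)
    (hfin : ∫⁻ s in Ω, ENNReal.ofReal (s ^ k) ∂ν < ⊤)
    (μ : Measure ℝ) (μj : ℕ → Measure ℝ)
    (hμ : ∀ Δ : Set ℝ, MeasurableSet Δ →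
      μ Δ = (∫⁻ s in Δ ∩ Ω, ENNReal.ofReal (s ^ k) ∂ν) /
            (∫⁻ s in Ω, ENNReal.ofReal (s ^ k) ∂ν))
    (hμj : ∀ j, ∀ Δ : Set ℝ, MeasurableSet Δ →
      μj j Δ = (∫⁻ s in Δ ∩ Ωj j, ENNReal.ofReal (s ^ (k + 1)) ∂ν) /
               (∫⁻ s in Ωj j, ENNReal.ofReal (s ^ (k + 1)) ∂ν))
    (lsq : ℕ → ℝ≥0∞)
    (hlsq : ∀ j, lsq j = (∫⁻ s in Ωj j, ENNReal.ofReal (s ^ (k + 1)) ∂ν) /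
                       (∫⁻ s in Ω, ENNReal.ofReal (s ^ k) ∂ν)) :
    ∀ Δ : Set ℝ, MeasurableSet Δ →
      μ Δ = ∑' j : ℕ, lsq j * ∫⁻ s in Δ, ENNReal.ofReal (1 / s) ∂(μj j) := by
  intro Δ hΔ
  set f1 : ℝ → ℝ≥0∞ := fun s => ENNReal.ofReal (s ^ (k + 1)) with hf1
  set fk : ℝ → ℝ≥0∞ := fun s => ENNReal.ofReal (s ^ k) with hfk
  have hf1m : Measurable f1 := (measurable_id.pow_const _).ennreal_ofReal
  have hginv : Measurable fun s : ℝ => ENNReal.ofReal (1 / s) :=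
    (measurable_id.inv.const_mul 1).ennreal_ofReal
  set Cj : ℕ → ℝ≥0∞ := fun j => ∫⁻ s in Ωj j, f1 s ∂ν with hCj
  set C : ℝ≥0∞ := ∫⁻ s in Ω, fk s ∂ν with hC
  -- identify μj j as a normalized density measure
  have hμj_eq : ∀ j, μj j = (Cj j)⁻¹ • ((ν.restrict (Ωj j)).withDensity f1) := by
    intro j
    ext A hA
    rw [hμj j A hA, Measure.smul_apply, smul_eq_mul,
      withDensity_apply _ hA, Measure.restrict_restrict hA, ENNReal.div_eq_inv_mul]
  -- compute the integral of 1/s against μj j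
  have hint : ∀ j, (∫⁻ s in Δ, ENNReal.ofReal (1 / s) ∂(μj j))
      = (Cj j)⁻¹ * ∫⁻ s in Δ ∩ Ωj j, fk s ∂ν := by
    intro j
    rw [hμj_eq j, Measure.restrict_smul, lintegral_smul_measure]
    congr 1
    rw [setLIntegral_withDensity_eq_setLIntegral_mul _ hf1m hginv hΔ,
      Measure.restrict_restrict hΔ]
    apply setLIntegral_congr_fun (hΔ.inter (hΩm j))
    intro s hs
    have h1 : (1 : ℝ) ≤ s := hΩ1 (hunion ▸ Set.mem_iUnion.2 ⟨j, hs.2⟩)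
    have hs0 : s ≠ 0 := by linarith
    simp only [Pi.mul_apply, hf1]
    rw [← ENNReal.ofReal_mul (by positivity)]
    congr 1
    field_simp
    ring
  have hCj0 : ∀ j, Cj j ≠ 0 := fun j => (hjpos j).ne'
  have hCjt : ∀ j, Cj j ≠ ⊤ := fun j => (hjfin j).ne
  calc μ Δ = (∫⁻ s in Δ ∩ Ω, fk s ∂ν) / C := hμ Δ hΔ
    _ = C⁻¹ * ∑' j, ∫⁻ s in Δ ∩ Ωj j, fk s ∂ν := by
        rw [ENNReal.div_eq_inv_mul]
        congr 1
        have : Δ ∩ Ω = ⋃ j, Δ ∩ Ωj j := by rw [hunion, Set.inter_iUnion]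
        rw [this, lintegral_iUnion (fun j => hΔ.inter (hΩm j))
          (fun i j hij => ((hdisj hij).inter_left' Δ).inter_right' Δ)]
    _ = ∑' j, lsq j * ∫⁻ s in Δ, ENNReal.ofReal (1 / s) ∂(μj j) := by
        rw [← ENNReal.tsum_mul_left]
        congr 1 with j
        rw [hint j, hlsq j, ENNReal.div_eq_inv_mul]
        rw [show C⁻¹ * Cj j * ((Cj j)⁻¹ * ∫⁻ s in Δ ∩ Ωj j, fk s ∂ν)
          = (Cj j * (Cj j)⁻¹) * (C⁻¹ * ∫⁻ s in Δ ∩ Ωj j, fk s ∂ν) by ring,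
          ENNReal.mul_inv_cancel (hCj0 j) (hCjt j), one_mul]
end

section
/- Let {μ_j}_{j≥0} be Borel probability measures on [0,∞) such that the closed support of μ_j is contained in [ϑ_j, ∞), where ϑ_0 = 1, each ϑ_j ≥ 1, and Σ_{j≥0} 1/ϑ_j < ∞. Suppose n ≥ 1 and ∫ s^{n-1} dμ_j(s) < ∞ for all j. Define λ̃_j = (ϑ_j ∫ s^{n-1} dμ_j(s))^{-1/2}. Then ζ := Σ_{j≥0} λ̃_j² ∫ (1/s) dμ_j(s) satisfies 0 < ζ < ∞, and the measure μ(Δ) = ζ^{-1} Σ_{j≥0} λ̃_j² ∫_Δ (1/s) dμ_j(s) is a Borel probability measure on [1,∞) satisfying ∫ s^n dμ(s) < ∞ and ∫ s^{n+1} dμ(s) = ∞. -/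
open MeasureTheory ENNReal

/-- Let `{μ_j}` be Borel probability measures with `supp μ_j ⊆ [ϑ_j,∞)`, `ϑ_0 = 1`,
`ϑ_j ≥ 1`, `Σ_j 1/ϑ_j < ∞`, `n ≥ 1` and `∫ s^{n-1} dμ_j < ∞`.  With
`λ̃_j² = (ϑ_j ∫ s^{n-1} dμ_j)⁻¹` and `ζ = Σ_j λ̃_j² ∫ (1/s) dμ_j`, one has `0 < ζ < ∞`
and the measure `μ(Δ) = ζ⁻¹ Σ_j λ̃_j² ∫_Δ (1/s) dμ_j` is a Borel probability measure
supported in `[1,∞)` with `∫ s^n dμ < ∞` and `∫ s^{n+1} dμ = ∞`. -/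
theorem exists_measure_with_prescribed_moments
    (ϑ : ℕ → ℝ) (hϑ0 : ϑ 0 = 1) (hϑ1 : ∀ j, 1 ≤ ϑ j)
    (hsum : Summable (fun j => 1 / ϑ j))
    (μj : ℕ → Measure ℝ) (hprob : ∀ j, IsProbabilityMeasure (μj j))
    (hsupp : ∀ j, μj j (Set.Iio (ϑ j)) = 0)
    (n : ℕ) (hn : 1 ≤ n)
    (hmom : ∀ j, ∫⁻ s, ENNReal.ofReal (s ^ (n - 1)) ∂(μj j) < ⊤)
    (lsq : ℕ → ℝ≥0∞)
    (hlsq : ∀ j, lsq j =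
      (ENNReal.ofReal (ϑ j) * ∫⁻ s, ENNReal.ofReal (s ^ (n - 1)) ∂(μj j))⁻¹) :
    (0 < ∑' j : ℕ, lsq j * ∫⁻ s, ENNReal.ofReal (1 / s) ∂(μj j)) ∧
    (∑' j : ℕ, lsq j * ∫⁻ s, ENNReal.ofReal (1 / s) ∂(μj j) < ⊤) ∧
    ∃ μ : Measure ℝ,
      (∀ Δ : Set ℝ, MeasurableSet Δ →
        μ Δ = (∑' j : ℕ, lsq j * ∫⁻ s, ENNReal.ofReal (1 / s) ∂(μj j))⁻¹ *
              ∑' j : ℕ, lsq j * ∫⁻ s in Δ, ENNReal.ofReal (1 / s) ∂(μj j)) ∧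
      IsProbabilityMeasure μ ∧ μ (Set.Iio 1) = 0 ∧
      (∫⁻ s, ENNReal.ofReal (s ^ n) ∂μ < ⊤) ∧
      (∫⁻ s, ENNReal.ofReal (s ^ (n + 1)) ∂μ = ⊤) := by
  have := fun j => hprob j
  set f : ℝ → ℝ≥0∞ := fun s => ENNReal.ofReal (1 / s) with hfdef
  have hfm : Measurable f := (measurable_const.div measurable_id).ennreal_ofReal
  set M : ℕ → ℝ≥0∞ := fun j => ∫⁻ s, ENNReal.ofReal (s ^ (n - 1)) ∂(μj j) with hMdef
  set I : ℕ → ℝ≥0∞ := fun j => ∫⁻ s, f s ∂(μj j) with hIdef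
  set ζ : ℝ≥0∞ := ∑' j : ℕ, lsq j * I j with hζdef
  have hϑpos : ∀ j, (0:ℝ) < ϑ j := fun j => lt_of_lt_of_le one_pos (hϑ1 j)
  -- a.e. bounds
  have hae : ∀ j, ∀ᵐ s ∂(μj j), ϑ j ≤ s := by
    intro j
    refine (ae_iff).2 ?_
    simpa [not_le, Set.Iio] using hsupp j
  have h1 : ∀ j, ∀ᵐ s ∂(μj j), 1 ≤ s :=
    fun j => (hae j).mono fun s hs => le_trans (hϑ1 j) hs
  -- M bounds
  have hM1 : ∀ j, 1 ≤ M j := by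
    intro j
    have h : ∫⁻ _, (1:ℝ≥0∞) ∂(μj j) ≤ M j := by
      refine lintegral_mono_ae ((h1 j).mono fun s hs => ?_)
      calc (1:ℝ≥0∞) = ENNReal.ofReal 1 := by simp
        _ ≤ ENNReal.ofReal (s ^ (n - 1)) :=
          ENNReal.ofReal_le_ofReal (one_le_pow₀ hs)
    simpa using h
  have hM0 : ∀ j, M j ≠ 0 := fun j => by
    intro h; exact absurd (h ▸ hM1 j) (by simp)
  have hMtop : ∀ j, M j ≠ ⊤ := fun j => (hmom j).ne
  have hD0 : ∀ j, ENNReal.ofReal (ϑ j) * M j ≠ 0 := fun j =>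
    mul_ne_zero (ENNReal.ofReal_pos.2 (hϑpos j)).ne' (hM0 j)
  have hDtop : ∀ j, ENNReal.ofReal (ϑ j) * M j ≠ ⊤ :=
    fun j => ENNReal.mul_ne_top ENNReal.ofReal_ne_top (hMtop j)
  have hl0 : ∀ j, lsq j ≠ 0 := fun j => by
    rw [hlsq j]; exact ENNReal.inv_ne_zero.2 (hDtop j)
  have hltop : ∀ j, lsq j ≠ ⊤ := fun j => by
    rw [hlsq j]; exact ENNReal.inv_ne_top.2 (hD0 j)
  have hlle : ∀ j, lsq j ≤ (ENNReal.ofReal (ϑ j))⁻¹ := fun j => by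
    rw [hlsq j]
    exact ENNReal.inv_le_inv.2 (le_mul_of_one_le_right zero_le (hM1 j))
  -- I bounds
  have hIle : ∀ j, I j ≤ 1 := by
    intro j
    have h : I j ≤ ∫⁻ _, (1:ℝ≥0∞) ∂(μj j) := by
      refine lintegral_mono_ae ((h1 j).mono fun s hs => ?_)
      show ENNReal.ofReal (1 / s) ≤ 1
      exact ENNReal.ofReal_le_one.2 ((div_le_one (lt_of_lt_of_le one_pos hs)).2 hs)
    simpa using h
  have hI0 : I 0 ≠ 0 := by
    intro h
    rw [hIdef] at h
    rw [lintegral_eq_zero_iff hfm] at h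
    have hFalse : ∀ᵐ s ∂(μj 0), False := by
      refine ((h1 0).and h).mono fun s ⟨hs1, hs0⟩ => ?_
      simp only [Pi.zero_apply, hfdef, ENNReal.ofReal_eq_zero] at hs0
      have : (0:ℝ) < 1 / s := one_div_pos.2 (by linarith)
      linarith
    have h2 : (μj 0) Set.univ = 0 := by simpa [ae_iff] using hFalse
    have h3 : (μj 0) Set.univ = 1 := measure_univ
    rw [h2] at h3
    exact zero_ne_one h3
  -- term bound
  have hterm : ∀ j, lsq j * I j ≤ ENNReal.ofReal (1 / ϑ j) := by
    intro j
    calc lsq j * I j ≤ (ENNReal.ofReal (ϑ j))⁻¹ * 1 := mul_le_mul' (hlle j) (hIle j)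
      _ = ENNReal.ofReal (1 / ϑ j) := by
          rw [mul_one, one_div, ENNReal.ofReal_inv_of_pos (hϑpos j)]
  have hζtop : ζ < ⊤ := by
    refine lt_of_le_of_lt (ENNReal.tsum_le_tsum hterm) ?_
    rw [← ENNReal.ofReal_tsum_of_nonneg (fun j => div_nonneg zero_le_one (hϑpos j).le) hsum]
    exact ENNReal.ofReal_lt_top
  have hζpos : 0 < ζ := by
    exact lt_of_lt_of_le (ENNReal.mul_pos (hl0 0) hI0) (ENNReal.le_tsum 0)
  refine ⟨hζpos, hζtop, ?_⟩
  -- the measure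
  set ν : Measure ℝ := ζ⁻¹ • Measure.sum (fun j => lsq j • (μj j).withDensity f) with hνdef
  have hνapp : ∀ Δ : Set ℝ, MeasurableSet Δ →
      ν Δ = ζ⁻¹ * ∑' j : ℕ, lsq j * ∫⁻ s in Δ, f s ∂(μj j) := by
    intro Δ hΔ
    simp [hνdef, Measure.sum_apply _ hΔ, withDensity_apply _ hΔ]
  have hζinv_top : ζ⁻¹ ≠ ⊤ := ENNReal.inv_ne_top.2 hζpos.ne'
  have hζinv_0 : ζ⁻¹ ≠ 0 := ENNReal.inv_ne_zero.2 hζtop.ne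
  have hprobν : IsProbabilityMeasure ν := by
    constructor
    rw [hνapp Set.univ MeasurableSet.univ]
    simp only [Measure.restrict_univ]
    exact ENNReal.inv_mul_cancel hζpos.ne' hζtop.ne
  have hIio : ν (Set.Iio 1) = 0 := by
    rw [hνapp _ measurableSet_Iio]
    have : ∀ j, ∫⁻ s in Set.Iio 1, f s ∂(μj j) = 0 := by
      intro j
      refine setLIntegral_measure_zero _ _ ?_
      exact le_antisymm (le_trans (measure_mono (Set.Iio_subset_Iio (hϑ1 j))) (hsupp j).le)
        zero_le
    simp [this]
  have hlint : ∀ (g : ℝ → ℝ≥0∞), Measurable g →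
      ∫⁻ s, g s ∂ν = ζ⁻¹ * ∑' j : ℕ, lsq j * ∫⁻ s, f s * g s ∂(μj j) := by
    intro g hg
    rw [hνdef, lintegral_smul_measure, lintegral_sum_measure]
    congr 1
    refine tsum_congr fun j => ?_
    rw [lintegral_smul_measure, lintegral_withDensity_eq_lintegral_mul _ hfm hg]
    rfl
  have hgm : ∀ k : ℕ, Measurable (fun s : ℝ => ENNReal.ofReal (s ^ k)) :=
    fun k => (measurable_id.pow_const k).ennreal_ofReal
  -- finite n-th moment
  have hmomn : ∫⁻ s, ENNReal.ofReal (s ^ n) ∂ν < ⊤ := by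
    rw [hlint _ (hgm n)]
    have hinner : ∀ j, ∫⁻ s, f s * ENNReal.ofReal (s ^ n) ∂(μj j) = M j := by
      intro j
      refine lintegral_congr_ae ((h1 j).mono fun s hs => ?_)
      have hs0 : s ≠ 0 := ne_of_gt (by linarith)
      rw [hfdef]
      simp only
      rw [← ENNReal.ofReal_mul (one_div_nonneg.2 (by linarith))]
      congr 1
      have hn' : n - 1 + 1 = n := Nat.succ_pred_eq_of_pos hn
      calc (1 / s) * s ^ n = (1 / s) * (s ^ (n - 1) * s) := by rw [← pow_succ, hn']
        _ = s ^ (n - 1) * (s * (1 / s)) := by ring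
        _ = s ^ (n - 1) := by rw [mul_one_div, div_self hs0, mul_one]
    have hterm2 : ∀ j, lsq j * M j = ENNReal.ofReal (1 / ϑ j) := by
      intro j
      rw [hlsq j, ENNReal.mul_inv (Or.inl (ENNReal.ofReal_pos.2 (hϑpos j)).ne')
        (Or.inr (hM0 j)), mul_assoc, ENNReal.inv_mul_cancel (hM0 j) (hMtop j), mul_one,
        one_div, ENNReal.ofReal_inv_of_pos (hϑpos j)]
    simp only [hinner, hterm2]
    refine ENNReal.mul_lt_top hζinv_top.lt_top ?_
    rw [← ENNReal.ofReal_tsum_of_nonneg (fun j => div_nonneg zero_le_one (hϑpos j).le) hsum]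
    exact ENNReal.ofReal_lt_top
  -- infinite (n+1)-st moment
  have hmomn1 : ∫⁻ s, ENNReal.ofReal (s ^ (n + 1)) ∂ν = ⊤ := by
    rw [hlint _ (hgm (n + 1))]
    have hinner : ∀ j, ENNReal.ofReal (ϑ j) * M j ≤
        ∫⁻ s, f s * ENNReal.ofReal (s ^ (n + 1)) ∂(μj j) := by
      intro j
      have : ENNReal.ofReal (ϑ j) * M j =
          ∫⁻ s, ENNReal.ofReal (ϑ j) * ENNReal.ofReal (s ^ (n - 1)) ∂(μj j) := by
        rw [lintegral_const_mul _ (hgm (n - 1))]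
      rw [this]
      refine lintegral_mono_ae ((hae j).and (h1 j) |>.mono fun s ⟨hsϑ, hs1⟩ => ?_)
      have hs0 : s ≠ 0 := ne_of_gt (by linarith)
      rw [hfdef]
      simp only
      rw [← ENNReal.ofReal_mul (one_div_nonneg.2 (by linarith)),
        ← ENNReal.ofReal_mul (hϑpos j).le]
      refine ENNReal.ofReal_le_ofReal ?_
      have hn' : n - 1 + 1 = n := Nat.succ_pred_eq_of_pos hn
      have h2 : (1 / s) * s ^ (n + 1) = s ^ n := by
        calc (1 / s) * s ^ (n + 1) = (1 / s) * (s ^ n * s) := by rw [← pow_succ]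
          _ = s ^ n * (s * (1 / s)) := by ring
          _ = s ^ n := by rw [mul_one_div, div_self hs0, mul_one]
      rw [h2]
      calc ϑ j * s ^ (n - 1) ≤ s * s ^ (n - 1) :=
            mul_le_mul_of_nonneg_right hsϑ (pow_nonneg (by linarith) _)
        _ = s ^ n := by rw [← pow_succ', hn']
      -- done
    have hge : ∀ j, (1:ℝ≥0∞) ≤ lsq j * ∫⁻ s, f s * ENNReal.ofReal (s ^ (n + 1)) ∂(μj j) := by
      intro j
      calc (1:ℝ≥0∞) = lsq j * (ENNReal.ofReal (ϑ j) * M j) := by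
            rw [hlsq j, ENNReal.inv_mul_cancel (hD0 j) (hDtop j)]
        _ ≤ _ := mul_le_mul_right (hinner j) _
    have htop : (∑' j : ℕ, lsq j * ∫⁻ s, f s * ENNReal.ofReal (s ^ (n + 1)) ∂(μj j)) = ⊤ := by
      refine eq_top_iff.2 ?_
      calc (⊤:ℝ≥0∞) = ∑' _ : ℕ, (1:ℝ≥0∞) := (ENNReal.tsum_const_eq_top_of_ne_zero one_ne_zero).symm
        _ ≤ _ := ENNReal.tsum_le_tsum hge
    rw [htop, ENNReal.mul_top hζinv_0]
  exact ⟨ν, hνapp, hprobν, hIio, hmomn, hmomn1⟩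
end
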